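/- With notation as in the previous statement (Γ strictly generated by r₀,…,r_h with divisor sequence d₁ > ⋯ > d_{h+1} = 1), the conductor of Γ (the least c with c + ℕ ⊆ Γ) equals −r₀ + 1 + Σ_{j=1}^{h} r_j (d_j/d_{j+1} − 1). -/

import Mathlib

set_option maxHeartbeats 4000000

private lemma conductor_key : ∀ (h : ℕ) (r d : ℕ → ℕ),
    (∀ j, j ≤ h → 0 < r j) →
    (∀ j, 1 ≤ j → j ≤ h + 1 → d j = (Finset.range j).gcd r) →
    (∀ j, 1 ≤ j → j ≤ h → d (j + 1) < d j) →
    d (h + 1) = 1 →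
    (∀ j, 1 ≤ j → j + 1 ≤ h → (d j / d (j + 1)) * r j < r (j + 1)) →
    ∃ c : ℕ,
      (c : ℤ) = -(r 0 : ℤ) + 1 +
          ∑ j ∈ Finset.Icc 1 h, (r j : ℤ) * ((d j / d (j + 1) : ℕ) - 1 : ℤ) ∧
      IsLeast {m : ℕ | ∀ n : ℕ, m ≤ n →
        ∃ a : ℕ → ℕ, n = ∑ j ∈ Finset.range (h + 1), a j * r j} c ∧
      (h = 0 → c = 0) ∧
      (1 ≤ h → c ≤ (d h / d (h + 1)) * r h) := by
  intro h
  induction h with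
  | zero =>
    intro r d hpos hd hdec hone hstrict
    have hr0 : r 0 = 1 := by
      have := hd 1 le_rfl le_rfl
      rw [hone] at this
      simpa [Finset.range_one] using this.symm
    refine ⟨0, by simp [hr0], ⟨?_, fun m hm => Nat.zero_le m⟩, fun _ => rfl, by omega⟩
    intro n _
    exact ⟨fun _ => n, by simp [hr0]⟩
  | succ h ih =>
    intro r d hpos hd hdec hone hstrict
    have hone : d (h + 2) = 1 := hone
    set D := d (h + 1) with hDdef
    set R := r (h + 1) with hRdef
    have hDgcd : D = (Finset.range (h + 1)).gcd r := hd (h + 1) (by omega) (by omega)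
    have hDdvdr : ∀ j, j ≤ h → D ∣ r j := by
      intro j hj
      rw [hDgcd]
      exact Finset.gcd_dvd (by simp; omega)
    have hD2 : 2 ≤ D := by
      have h1 : d (h + 2) < D := hdec (h + 1) (by omega) le_rfl
      omega
    have hcop : Nat.Coprime R D := by
      have h1 : d (h + 2) = (Finset.range (h + 2)).gcd r := hd (h + 2) (by omega) le_rfl
      rw [hone] at h1
      rw [Finset.range_add_one, Finset.gcd_insert, ← hDgcd] at h1
      exact h1.symm
    have hDpos : 0 < D := by omega
    have hDdvdd : ∀ j, 1 ≤ j → j ≤ h + 1 → D ∣ d j := by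
      intro j h1 h2
      rw [hd j h1 (by omega)]
      exact Finset.dvd_gcd fun i hi => hDdvdr i (by simp at hi; omega)
    set r' : ℕ → ℕ := fun j => r j / D with hr'def
    set d' : ℕ → ℕ := fun j => d j / D with hd'def
    have hr' : ∀ j, j ≤ h → r j = D * r' j := fun j hj =>
      (Nat.mul_div_cancel' (hDdvdr j hj)).symm
    have hd'' : ∀ j, 1 ≤ j → j ≤ h + 1 → d j = D * d' j := fun j h1 h2 =>
      (Nat.mul_div_cancel' (hDdvdd j h1 h2)).symm
    have hpos' : ∀ j, j ≤ h → 0 < r' j := by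
      intro j hj
      exact Nat.div_pos (Nat.le_of_dvd (hpos j (by omega)) (hDdvdr j hj)) hDpos
    have hdgcd' : ∀ j, 1 ≤ j → j ≤ h + 1 → d' j = (Finset.range j).gcd r' := by
      intro j h1 h2
      have e1 : (Finset.range j).gcd r = (Finset.range j).gcd (fun i => D * r' i) := by
        apply Finset.gcd_congr rfl
        intro i hi
        exact hr' i (by simp at hi; omega)
      have e2 : (Finset.range j).gcd (fun i => D * r' i) = D * (Finset.range j).gcd r' := by
        rw [Finset.gcd_mul_left]
        simp
      have := hd j h1 (by omega)
      rw [e1, e2] at this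
      simp only [hd'def, this]
      exact Nat.mul_div_cancel_left _ hDpos
    have hdec' : ∀ j, 1 ≤ j → j ≤ h → d' (j + 1) < d' j := by
      intro j h1 h2
      exact Nat.div_lt_div_of_lt_of_dvd (hDdvdd j h1 (by omega)) (hdec j h1 (by omega))
    have hone' : d' (h + 1) = 1 := Nat.div_self hDpos
    have hndiv : ∀ j, 1 ≤ j → j ≤ h → d' j / d' (j + 1) = d j / d (j + 1) := by
      intro j h1 h2
      have hDd : D ∣ d (j + 1) := hDdvdd (j + 1) (by omega) (by omega)
      obtain ⟨e, he⟩ := hDd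
      have hDe : d' (j + 1) = e := by
        simp only [hd'def, he]
        exact Nat.mul_div_cancel_left _ hDpos
      rw [hDe, hd'def]
      simp only
      rw [Nat.div_div_eq_div_mul, ← he]
    have hstrict' : ∀ j, 1 ≤ j → j + 1 ≤ h → (d' j / d' (j + 1)) * r' j < r' (j + 1) := by
      intro j h1 h2
      rw [hndiv j h1 (by omega)]
      have e1 : (d j / d (j + 1)) * r' j = ((d j / d (j + 1)) * r j) / D := by
        rw [Nat.mul_div_assoc _ (hDdvdr j (by omega))]
      rw [e1]
      exact Nat.div_lt_div_of_lt_of_dvd (hDdvdr (j + 1) (by omega))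
        (hstrict j h1 (by omega))
    obtain ⟨c', hc'formula, ⟨hc'mem, hc'lb⟩, hc'0, hc'bound⟩ :=
      ih r' d' hpos' hdgcd' hdec' hone' hstrict'
    -- key bound: D * c' ≤ R - 1 (or c' = 0)
    have hDc'le : D * c' + 1 ≤ R + D := by
      rcases Nat.eq_zero_or_pos h with hh | hh
      · rw [hc'0 hh]
        have := hpos (h + 1) le_rfl
        omega
      · have hb := hc'bound hh
        have hkey : D * c' < R := by
          calc D * c' ≤ D * ((d' h / d' (h + 1)) * r' h) := Nat.mul_le_mul_left _ hb
            _ = (d h / d (h + 1)) * (D * r' h) := by rw [hndiv h hh le_rfl]; ring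
            _ = (d h / d (h + 1)) * r h := by rw [← hr' h le_rfl]
            _ < R := hstrict h hh le_rfl
        omega
    have hc'le : c' ≤ R := by
      rcases Nat.eq_zero_or_pos h with hh | hh
      · rw [hc'0 hh]; omega
      · nlinarith [hc'bound hh]
    have hRpos : 0 < R := hpos (h + 1) le_rfl
    set c : ℕ := D * c' + (D - 1) * R + 1 - D with hcdef
    have hcD : D ≤ D * c' + (D - 1) * R + 1 := by
      have h5 : D - 1 ≤ (D - 1) * R := Nat.le_mul_of_pos_right _ hRpos
      omega
    have hcZ : (c : ℤ) = D * c' + ((D : ℤ) - 1) * R + 1 - D := by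
      rw [hcdef]
      push_cast [Nat.cast_sub hcD, Nat.cast_sub (by omega : 1 ≤ D)]
      ring
    -- the sum identity
    have hsumId : ∑ j ∈ Finset.Icc 1 (h + 1), (r j : ℤ) * ((d j / d (j + 1) : ℕ) - 1 : ℤ)
        = D * (∑ j ∈ Finset.Icc 1 h, (r' j : ℤ) * ((d' j / d' (j + 1) : ℕ) - 1 : ℤ))
          + R * ((D : ℤ) - 1) := by
      rw [Finset.sum_Icc_succ_top (by omega : 1 ≤ h + 1)]
      have e1 : (d (h + 1) / d (h + 1 + 1) : ℕ) = D := by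
        rw [show h + 1 + 1 = h + 2 from rfl, hone, Nat.div_one]
      rw [e1, Finset.mul_sum]
      congr 1
      apply Finset.sum_congr rfl
      intro j hj
      simp only [Finset.mem_Icc] at hj
      rw [hndiv j hj.1 hj.2, hr' j hj.2]
      push_cast
      ring
    have hformula : (c : ℤ) = -(r 0 : ℤ) + 1 +
        ∑ j ∈ Finset.Icc 1 (h + 1), (r j : ℤ) * ((d j / d (j + 1) : ℕ) - 1 : ℤ) := by
      rw [hsumId, hcZ]
      have hr0 : (r 0 : ℤ) = D * (r' 0 : ℤ) := by exact_mod_cast hr' 0 (by omega)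
      rw [hr0]
      linear_combination (D : ℤ) * hc'formula
    -- membership of c
    have hmemc : ∀ n : ℕ, c ≤ n →
        ∃ a : ℕ → ℕ, n = ∑ j ∈ Finset.range (h + 2), a j * r j := by
      intro n hn
      obtain ⟨u, -, hu⟩ := Nat.exists_mul_mod_eq_one_of_coprime hcop hD2
      set s : ℕ := (n * u) % D with hsdef
      have hs : s < D := Nat.mod_lt _ hDpos
      have hmod : s * R ≡ n [MOD D] := by
        calc s * R ≡ n * u * R [MOD D] := Nat.ModEq.mul_right R (Nat.mod_modEq _ D)
          _ = n * (R * u) := by ring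
          _ ≡ n * ((R * u) % D) [MOD D] := (Nat.ModEq.mul_left n (Nat.mod_modEq _ D)).symm
          _ = n * 1 := by rw [hu]
          _ = n := by ring
      have hdvd : (D : ℤ) ∣ (n : ℤ) - (s : ℤ) * R := by
        have := hmod.dvd
        push_cast at this
        exact this
      obtain ⟨k, hk⟩ := hdvd
      have hnge : (c : ℤ) ≤ n := by exact_mod_cast hn
      have hsle : (s : ℤ) ≤ (D : ℤ) - 1 := by
        have : (s : ℤ) < D := by exact_mod_cast hs
        omega
      have hRposZ : (0 : ℤ) < R := by exact_mod_cast hRpos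
      have hkgt : (D : ℤ) * ((c' : ℤ) - 1) < D * k := by
        rw [← hk]
        have : ((D : ℤ) - 1 - s) * R ≥ 0 := by
          apply mul_nonneg (by linarith) (by linarith)
        nlinarith [hcZ, hnge]
      have hkge : (c' : ℤ) ≤ k := by
        have := lt_of_mul_lt_mul_left hkgt (by positivity : (0 : ℤ) ≤ (D : ℤ))
        omega
      have hkge0 : (0 : ℤ) ≤ k := le_trans (by positivity) hkge
      obtain ⟨a, ha⟩ := hc'mem k.toNat (by
        have : (c' : ℤ) ≤ (k.toNat : ℤ) := by rwa [Int.toNat_of_nonneg hkge0]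
        exact_mod_cast this)
      refine ⟨fun j => if j = h + 1 then s else a j, ?_⟩
      rw [Finset.sum_range_succ]
      simp only [if_pos rfl]
      have hsum1 : ∑ j ∈ Finset.range (h + 1), (if j = h + 1 then s else a j) * r j
          = D * k.toNat := by
        have : ∀ j ∈ Finset.range (h + 1),
            (if j = h + 1 then s else a j) * r j = D * (a j * r' j) := by
          intro j hj
          simp only [Finset.mem_range] at hj
          rw [if_neg (by omega), hr' j (by omega)]
          ring
        rw [Finset.sum_congr rfl this, ← Finset.mul_sum, ← ha]
      rw [hsum1]
      have : (n : ℤ) = (D : ℤ) * k.toNat + s * R := by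
        rw [Int.toNat_of_nonneg hkge0]
        linarith [hk]
      exact_mod_cast this
    refine ⟨c, hformula, ⟨hmemc, ?_⟩, by omega, ?_⟩
    · -- lower bound
      intro m hm
      by_contra hlt
      push_neg at hlt
      have hc1 : m ≤ c - 1 ∧ 1 ≤ c := by omega
      obtain ⟨a, ha⟩ := hm (c - 1) hc1.1
      set A := a (h + 1) with hAdef
      set S : ℕ := ∑ j ∈ Finset.range (h + 1), a j * r' j with hSdef
      have haZ : (D : ℤ) * S + A * R = (c : ℤ) - 1 := by
        have e1 : ∑ j ∈ Finset.range (h + 1), a j * r j = D * S := by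
          rw [hSdef, Finset.mul_sum]
          apply Finset.sum_congr rfl
          intro j hj
          simp only [Finset.mem_range] at hj
          rw [hr' j (by omega)]
          ring
        have e2 : c - 1 = D * S + A * R := by
          rw [ha, Finset.sum_range_succ, e1]
        have := congrArg (fun x : ℕ => (x : ℤ)) e2
        push_cast [Nat.cast_sub hc1.2] at this
        linarith
      have hcm1 : (c : ℤ) - 1 = D * c' + ((D : ℤ) - 1) * R - D := by rw [hcZ]; ring
      have hdvdA : (D : ℤ) ∣ ((A : ℤ) - ((D : ℤ) - 1)) * R := by
        refine ⟨(c' : ℤ) - 1 - S, ?_⟩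
        have : (A : ℤ) * R = (c : ℤ) - 1 - D * S := by linarith
        rw [sub_mul, this, hcm1]
        ring
      have hcopZ : IsCoprime (D : ℤ) (R : ℤ) := by
        rw [Int.isCoprime_iff_gcd_eq_one, Int.gcd_natCast_natCast]
        exact hcop.symm
      obtain ⟨t, ht⟩ := hcopZ.dvd_of_dvd_mul_right hdvdA
      have htge : 0 ≤ t := by nlinarith [ht, Int.natCast_nonneg A]
      have hSt : (S : ℤ) + t * R = (c' : ℤ) - 1 := by
        have hDne : (D : ℤ) ≠ 0 := by positivity
        have : (D : ℤ) * ((S : ℤ) + t * R) = (D : ℤ) * ((c' : ℤ) - 1) := by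
          have hA : (A : ℤ) = D * t + (D - 1) := by linarith [ht]
          nlinarith [haZ, hcm1, hA]
        exact mul_left_cancel₀ hDne this
      have ht0 : t = 0 := by
        by_contra ht0
        have h1t : 1 ≤ t := by omega
        have : (c' : ℤ) - 1 ≥ R := by nlinarith [Int.natCast_nonneg S]
        have : (R : ℤ) < c' := by linarith
        have : R < c' := by exact_mod_cast this
        omega
      rw [ht0] at hSt
      simp only [zero_mul, add_zero] at hSt
      have hc'1 : 1 ≤ c' := by
        have : (0 : ℤ) ≤ S := Int.natCast_nonneg S
        omega
      have hSc : S = c' - 1 := by omega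
      have : c' ≤ c' - 1 := by
        apply hc'lb
        intro n hn
        rcases Nat.lt_or_ge n c' with hlt' | hge'
        · have : n = c' - 1 := by omega
          exact ⟨a, by rw [this, ← hSc, hSdef]⟩
        · exact hc'mem n hge'
      omega
    · -- bound
      intro _
      rw [show h + 1 + 1 = h + 2 from rfl, hone, Nat.div_one]
      have : (c : ℤ) ≤ (D : ℤ) * R := by
        rw [hcZ]
        have : (D : ℤ) * c' + 1 ≤ (R : ℤ) + D := by exact_mod_cast hDc'le
        nlinarith [Int.natCast_nonneg R]
      exact_mod_cast this

/-- Let `Γ` be the numerical semigroup strictly generated by `r₀, …, r_h`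
(divisor sequence `d j = gcd(r₀,…,r_{j-1})` strictly decreasing to
`d (h+1) = 1`, and `(d j / d (j+1)) * r j < r (j+1)` for `1 ≤ j ≤ h−1`).
Then the conductor of `Γ` (the least `c` with `c + ℕ ⊆ Γ`) equals
`−r₀ + 1 + Σ_{j=1}^{h} r_j (d_j/d_{j+1} − 1)`. -/
theorem strictly_generated_semigroup_conductor (h : ℕ) (r d : ℕ → ℕ)
    (hpos : ∀ j, j ≤ h → 0 < r j)
    (hd : ∀ j, 1 ≤ j → j ≤ h + 1 → d j = (Finset.range j).gcd r)
    (hdec : ∀ j, 1 ≤ j → j ≤ h → d (j + 1) < d j)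
    (hone : d (h + 1) = 1)
    (hstrict : ∀ j, 1 ≤ j → j + 1 ≤ h → (d j / d (j + 1)) * r j < r (j + 1)) :
    ∃ c : ℕ,
      (c : ℤ) = -(r 0 : ℤ) + 1 +
          ∑ j ∈ Finset.Icc 1 h, (r j : ℤ) * ((d j / d (j + 1) : ℕ) - 1 : ℤ) ∧
      IsLeast {m : ℕ | ∀ n : ℕ, m ≤ n →
        ∃ a : ℕ → ℕ, n = ∑ j ∈ Finset.range (h + 1), a j * r j} c := by
  obtain ⟨c, h1, h2, _⟩ := conductor_key h r d hpos hd hdec hone hstrict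
  exact ⟨c, h1, h2⟩
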